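/- Suppose c₁ = 1/2 and the function Υ : ℝ → ℝ satisfies (1/2)·sinc(ν/2)·Υ(ν) = b̄₁(ν) and cos(ν/2)·Υ(ν) = b₁(ν) for ν ∈ {0, hω}. Then for every g : ℝ^d → ℝ^d and every (q,p) ∈ ℝ^d × ℝ^d, the one-stage explicit ERKN integrator coincides with the Strang splitting: Φ_h(q,p) = Φ_{h/2,L}(Φ_{h,NL}(Φ_{h/2,L}(q,p))). -/

import Mathlib

noncomputable section

/-- The (unnormalized) sinc function: `sinc x = sin x / x` for `x ≠ 0`, `sinc 0 = 1`. -/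
def rsinc (x : ℝ) : ℝ := if x = 0 then 1 else Real.sin x / x

/-- Real coordinate space `ℝ^d` with the Euclidean norm. -/
abbrev Vec (d : ℕ) : Type := EuclideanSpace ℝ (Fin d)

/-- Block-diagonal scalar operator: multiplies the first `d₁` coordinates by `a`
and the remaining `d₂` coordinates by `b`.  This realizes `f(hΩ)` for
`Ω = diag(0·I_{d₁}, ω·I_{d₂})`, with `a = f 0` and `b = f (hω)`. -/
def bop (d₁ d₂ : ℕ) (a b : ℝ) (v : Vec (d₁ + d₂)) : Vec (d₁ + d₂) :=
  WithLp.toLp 2 (fun i : Fin (d₁ + d₂) => (if (i : ℕ) < d₁ then a else b) * v i)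

/-- One-stage explicit ERKN integrator `Φ_h` for `q'' + Ω²q = g(q)`:
`Q = cos(c₁hΩ)q + c₁h·sinc(c₁hΩ)p`,
`q⁺ = cos(hΩ)q + h·sinc(hΩ)p + h²·b̄₁(hΩ)g(Q)`,
`p⁺ = −hΩ²·sinc(hΩ)q + cos(hΩ)p + h·b₁(hΩ)g(Q)`. -/
def erkn (d₁ d₂ : ℕ) (h ω c₁ : ℝ) (bbar b₁ : ℝ → ℝ)
    (g : Vec (d₁ + d₂) → Vec (d₁ + d₂)) (x : Vec (d₁ + d₂) × Vec (d₁ + d₂)) :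
    Vec (d₁ + d₂) × Vec (d₁ + d₂) :=
  let q := x.1
  let p := x.2
  let Q := bop d₁ d₂ (Real.cos (c₁ * (h * 0))) (Real.cos (c₁ * (h * ω))) q
         + bop d₁ d₂ (c₁ * h * rsinc (c₁ * (h * 0))) (c₁ * h * rsinc (c₁ * (h * ω))) p
  ( bop d₁ d₂ (Real.cos (h * 0)) (Real.cos (h * ω)) q
    + bop d₁ d₂ (h * rsinc (h * 0)) (h * rsinc (h * ω)) p
    + bop d₁ d₂ (h ^ 2 * bbar (h * 0)) (h ^ 2 * bbar (h * ω)) (g Q),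
    bop d₁ d₂ (-(h * 0 ^ 2 * rsinc (h * 0))) (-(h * ω ^ 2 * rsinc (h * ω))) q
    + bop d₁ d₂ (Real.cos (h * 0)) (Real.cos (h * ω)) p
    + bop d₁ d₂ (h * b₁ (h * 0)) (h * b₁ (h * ω)) (g Q) )

/-- Exact time-`t` flow `Φ_{t,L}` of the linear equation `q̇ = p`, `ṗ = −Ω²q`. -/
def phiL (d₁ d₂ : ℕ) (ω t : ℝ) (x : Vec (d₁ + d₂) × Vec (d₁ + d₂)) :
    Vec (d₁ + d₂) × Vec (d₁ + d₂) :=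
  ( bop d₁ d₂ (Real.cos (t * 0)) (Real.cos (t * ω)) x.1
    + bop d₁ d₂ (t * rsinc (t * 0)) (t * rsinc (t * ω)) x.2,
    bop d₁ d₂ (-(t * 0 ^ 2 * rsinc (t * 0))) (-(t * ω ^ 2 * rsinc (t * ω))) x.1
    + bop d₁ d₂ (Real.cos (t * 0)) (Real.cos (t * ω)) x.2 )

/-- Time-`t` flow `Φ_{t,NL}` of the nonlinear equation `q̇ = 0`, `ṗ = Υ(hΩ)g(q)`. -/
def phiNL (d₁ d₂ : ℕ) (h ω : ℝ) (Υ : ℝ → ℝ) (g : Vec (d₁ + d₂) → Vec (d₁ + d₂))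
    (t : ℝ) (x : Vec (d₁ + d₂) × Vec (d₁ + d₂)) :
    Vec (d₁ + d₂) × Vec (d₁ + d₂) :=
  (x.1, x.2 + bop d₁ d₂ (t * Υ (h * 0)) (t * Υ (h * ω)) (g x.1))

/-- If `c₁ = 1/2` and `Υ` satisfies `(1/2)sinc(ν/2)Υ(ν) = b̄₁(ν)`,
`cos(ν/2)Υ(ν) = b₁(ν)` for `ν ∈ {0, hω}`, then the ERKN integrator coincides with
the Strang splitting `Φ_{h/2,L} ∘ Φ_{h,NL} ∘ Φ_{h/2,L}`. -/
theorem erkn_eq_strang (d₁ d₂ : ℕ) (h ω : ℝ) (hh : 0 < h) (hω : 0 < ω)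
    (bbar b₁ Υ : ℝ → ℝ)
    (hΥ₁ : ∀ ν ∈ ({0, h * ω} : Set ℝ), (1/2) * rsinc (ν / 2) * Υ ν = bbar ν)
    (hΥ₂ : ∀ ν ∈ ({0, h * ω} : Set ℝ), Real.cos (ν / 2) * Υ ν = b₁ ν)
    (g : Vec (d₁ + d₂) → Vec (d₁ + d₂)) (q p : Vec (d₁ + d₂)) :
    erkn d₁ d₂ h ω (1/2) bbar b₁ g (q, p)
      = phiL d₁ d₂ ω (h/2) (phiNL d₁ d₂ h ω Υ g h (phiL d₁ d₂ ω (h/2) (q, p))) := by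
  have hz : rsinc 0 = 1 := by simp [rsinc]
  have hhne : h ≠ 0 := ne_of_gt hh
  have hωne : ω ≠ 0 := ne_of_gt hω
  have hxne : h / 2 * ω ≠ 0 := by positivity
  have hb0 : bbar 0 = 1 / 2 * Υ 0 := by
    have := hΥ₁ 0 (by simp)
    simpa [hz] using this.symm
  have hc0 : b₁ 0 = Υ 0 := by
    have := hΥ₂ 0 (by simp)
    simpa using this.symm
  have hbω : bbar (h * ω) = 1 / 2 * rsinc (h / 2 * ω) * Υ (h * ω) := by
    have := hΥ₁ (h * ω) (by simp)
    rw [show h * ω / 2 = h / 2 * ω by ring] at this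
    exact this.symm
  have hcω : b₁ (h * ω) = Real.cos (h / 2 * ω) * Υ (h * ω) := by
    have := hΥ₂ (h * ω) (by simp)
    rw [show h * ω / 2 = h / 2 * ω by ring] at this
    exact this.symm
  have hr1 : rsinc (h * ω) = Real.sin (h * ω) / (h * ω) := by
    rw [rsinc, if_neg (by positivity)]
  have hr2 : rsinc (h / 2 * ω) = Real.sin (h / 2 * ω) / (h / 2 * ω) := by
    rw [rsinc, if_neg hxne]
  have hsin : Real.sin (h * ω) = 2 * Real.sin (h / 2 * ω) * Real.cos (h / 2 * ω) := by
    rw [show h * ω = 2 * (h / 2 * ω) by ring, Real.sin_two_mul]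
  have hcos : Real.cos (h * ω) = Real.cos (h / 2 * ω) ^ 2 - Real.sin (h / 2 * ω) ^ 2 := by
    have := Real.cos_sq_add_sin_sq (h / 2 * ω)
    rw [show h * ω = 2 * (h / 2 * ω) by ring, Real.cos_two_mul]
    nlinarith [this]
  simp only [erkn, phiL, phiNL, mul_zero, zero_mul, Real.cos_zero, hz, mul_one,
    neg_zero, zero_pow, Prod.mk.injEq,
    show (1:ℝ) / 2 * (h * ω) = h / 2 * ω by ring, show (1:ℝ) / 2 * h = h / 2 by ring]
  constructor <;> ext i <;>
    simp only [bop, PiLp.add_apply, PiLp.toLp_apply, hb0, hc0, hbω, hcω, hr1, hr2, hsin, hcos] <;>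
    by_cases hi : (i:ℕ) < d₁ <;>
    simp only [hi, if_true, if_false] <;>
    (field_simp; try ring)
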